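/- The function ζ ↦ (|ζ|² + √(|ζ|⁴ - ||ζ|_ℂ²|²))^{1/2} is a norm on ℂⁿ (viewed as a real or complex vector space). -/

import Mathlib

/-- The Lie norm on `ℂⁿ`: `‖ζ‖_{L_n} = (|ζ|² + √(|ζ|⁴ − ||ζ|_ℂ²|²))^{1/2}`. -/
noncomputable def lieNorm (n : ℕ) (ζ : EuclideanSpace ℂ (Fin n)) : ℝ :=
  Real.sqrt (‖ζ‖ ^ 2 + Real.sqrt (‖ζ‖ ^ 4 - ‖∑ j, ζ j ^ 2‖ ^ 2))

namespace LieAux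

variable {n : ℕ}

lemma sum_rot_mul (c d e k : ℝ) (f g : Fin n → ℝ) :
    ∑ j, (c * f j + d * g j) * (e * f j + k * g j)
      = c * e * ∑ j, f j ^ 2 + (c * k + d * e) * ∑ j, f j * g j
        + d * k * ∑ j, g j ^ 2 := by
  simp only [Finset.mul_sum, ← Finset.sum_add_distrib]
  exact Finset.sum_congr rfl fun j _ => by ring

lemma norm_sq_eq (ζ : EuclideanSpace ℂ (Fin n)) :
    ‖ζ‖ ^ 2 = (∑ j, (ζ j).re ^ 2) + ∑ j, (ζ j).im ^ 2 := by
  rw [EuclideanSpace.norm_eq, Real.sq_sqrt (by positivity)]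
  rw [← Finset.sum_add_distrib]
  exact Finset.sum_congr rfl fun j _ => by
    rw [Complex.sq_norm, Complex.normSq_apply]; ring

lemma sum_sq_re (ζ : EuclideanSpace ℂ (Fin n)) :
    (∑ j, ζ j ^ 2).re = (∑ j, (ζ j).re ^ 2) - ∑ j, (ζ j).im ^ 2 := by
  rw [Complex.re_sum, ← Finset.sum_sub_distrib]
  exact Finset.sum_congr rfl fun j _ => by
    rw [sq, Complex.mul_re]; ring

lemma sum_sq_im (ζ : EuclideanSpace ℂ (Fin n)) :
    (∑ j, ζ j ^ 2).im = 2 * ∑ j, (ζ j).re * (ζ j).im := by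
  rw [Complex.im_sum, Finset.mul_sum]
  exact Finset.sum_congr rfl fun j _ => by
    rw [sq, Complex.mul_im]; ring

lemma lieNorm_eq (ζ : EuclideanSpace ℂ (Fin n)) :
    lieNorm n ζ = Real.sqrt ((∑ j, (ζ j).re ^ 2) + (∑ j, (ζ j).im ^ 2)
      + 2 * Real.sqrt ((∑ j, (ζ j).re ^ 2) * (∑ j, (ζ j).im ^ 2)
        - (∑ j, (ζ j).re * (ζ j).im) ^ 2)) := by
  set X := ∑ j, (ζ j).re ^ 2
  set Y := ∑ j, (ζ j).im ^ 2
  set T := ∑ j, (ζ j).re * (ζ j).im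
  have habs : ‖∑ j, ζ j ^ 2‖ ^ 2 = (X - Y) ^ 2 + (2 * T) ^ 2 := by
    rw [Complex.sq_norm, Complex.normSq_apply, sum_sq_re, sum_sq_im]; ring
  have h4 : ‖ζ‖ ^ 4 - ‖∑ j, ζ j ^ 2‖ ^ 2 = 4 * (X * Y - T ^ 2) := by
    have : ‖ζ‖ ^ 4 = (‖ζ‖ ^ 2) ^ 2 := by ring
    rw [this, norm_sq_eq ζ, habs]; ring
  have hsqrt4 : Real.sqrt (4 * (X * Y - T ^ 2)) = 2 * Real.sqrt (X * Y - T ^ 2) := by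
    rw [show (4 : ℝ) = 2 ^ 2 by norm_num, Real.sqrt_mul (by positivity),
      Real.sqrt_sq (by norm_num)]
  rw [lieNorm, h4, hsqrt4, norm_sq_eq ζ]

lemma lieNorm_smul (c : ℂ) (ζ : EuclideanSpace ℂ (Fin n)) :
    lieNorm n (c • ζ) = ‖c‖ * lieNorm n ζ := by
  have hnorm : ‖c • ζ‖ = ‖c‖ * ‖ζ‖ := by
    rw [norm_smul]
  have hsum : (∑ j, (c • ζ) j ^ 2) = c ^ 2 * ∑ j, ζ j ^ 2 := by
    rw [Finset.mul_sum]
    exact Finset.sum_congr rfl fun j _ => by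
      simp [PiLp.smul_apply, smul_eq_mul]; ring
  set a := ‖c‖ with ha
  have ha0 : 0 ≤ a := norm_nonneg _
  set s := ‖ζ‖
  set q := ‖∑ j, ζ j ^ 2‖ with hq
  have habs : ‖∑ j, (c • ζ) j ^ 2‖ = a ^ 2 * q := by
    rw [hsum, norm_mul, norm_pow]
  rw [lieNorm, lieNorm, hnorm, habs]
  have h1 : (a * s) ^ 4 - (a ^ 2 * q) ^ 2 = a ^ 4 * (s ^ 4 - q ^ 2) := by ring
  have h2 : Real.sqrt (a ^ 4 * (s ^ 4 - q ^ 2)) = a ^ 2 * Real.sqrt (s ^ 4 - q ^ 2) := by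
    rw [show a ^ 4 = (a ^ 2) ^ 2 by ring, Real.sqrt_mul (by positivity),
      Real.sqrt_sq (by positivity)]
  rw [h1, h2, show (a * s) ^ 2 + a ^ 2 * Real.sqrt (s ^ 4 - q ^ 2)
      = a ^ 2 * (s ^ 2 + Real.sqrt (s ^ 4 - q ^ 2)) by ring,
    Real.sqrt_mul (by positivity), Real.sqrt_sq ha0]

lemma sum_sq_smul (c : ℂ) (ζ : EuclideanSpace ℂ (Fin n)) :
    (∑ j, (c • ζ) j ^ 2) = c ^ 2 * ∑ j, ζ j ^ 2 := by
  rw [Finset.mul_sum]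
  exact Finset.sum_congr rfl fun j _ => by
    simp [PiLp.smul_apply, smul_eq_mul]; ring

lemma exists_rot (ζ : EuclideanSpace ℂ (Fin n)) :
    ∃ μ : ℂ, ‖μ‖ = 1 ∧
      ∑ j, ((μ • ζ : EuclideanSpace ℂ (Fin n)) j).re * ((μ • ζ : EuclideanSpace ℂ (Fin n)) j).im
        = 0 := by
  set w := ∑ j, ζ j ^ 2 with hw
  set a := Complex.arg w with harg
  refine ⟨Complex.exp ((-a / 2 : ℝ) * Complex.I), Complex.norm_exp_ofReal_mul_I _, ?_⟩
  set μ := Complex.exp ((-a / 2 : ℝ) * Complex.I) with hμdef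
  have hμ2 : μ ^ 2 = Complex.exp ((-a : ℝ) * Complex.I) := by
    rw [hμdef, ← Complex.exp_nat_mul]
    congr 1
    push_cast
    ring
  have hreal : μ ^ 2 * w = (‖w‖ : ℂ) := by
    conv_lhs => rw [← Complex.norm_mul_exp_arg_mul_I w]
    rw [hμ2, mul_left_comm, ← Complex.exp_add]
    push_cast
    rw [← harg]
    ring_nf
    rw [Complex.exp_zero, mul_one]
  have him : (∑ j, ((μ • ζ : EuclideanSpace ℂ (Fin n)) j) ^ 2).im = 0 := by
    rw [sum_sq_smul, ← hw, hreal, Complex.ofReal_im]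
  rw [sum_sq_im] at him
  linarith

lemma lieNorm_eq_of_T_eq_zero (ζ : EuclideanSpace ℂ (Fin n))
    (hT : ∑ j, (ζ j).re * (ζ j).im = 0) :
    lieNorm n ζ = Real.sqrt (∑ j, (ζ j).re ^ 2) + Real.sqrt (∑ j, (ζ j).im ^ 2) := by
  rw [lieNorm_eq, hT]
  set X := ∑ j, (ζ j).re ^ 2 with hX
  set Y := ∑ j, (ζ j).im ^ 2 with hY
  have hX0 : 0 ≤ X := by positivity
  have hY0 : 0 ≤ Y := by positivity
  rw [show (0:ℝ)^2 = 0 by norm_num, sub_zero, Real.sqrt_mul hX0,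
    show X + Y + 2 * (Real.sqrt X * Real.sqrt Y)
      = (Real.sqrt X + Real.sqrt Y) ^ 2 by
        rw [add_sq, Real.sq_sqrt hX0, Real.sq_sqrt hY0]; ring,
    Real.sqrt_sq (by positivity)]

lemma rot_entry_le (c d P Q R : ℝ) (hc : c^2 + d^2 = 1) (hP : P ≤ 1) (hQ : Q ≤ 1)
    (hdet : R^2 ≤ (1-P)*(1-Q)) :
    c^2*P + 2*c*d*R + d^2*Q ≤ 1 := by
  have ha : 0 ≤ c^2*(1-P) := mul_nonneg (sq_nonneg c) (by linarith)
  have hb : 0 ≤ d^2*(1-Q) := mul_nonneg (sq_nonneg d) (by linarith)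
  have h1 : 4*(c^2*d^2)*R^2 ≤ 4*(c^2*d^2)*((1-P)*(1-Q)) :=
    mul_le_mul_of_nonneg_left hdet (by positivity)
  have h2 := sq_nonneg (c^2*(1-P) - d^2*(1-Q))
  nlinarith [ha, hb, h1, h2, sq_nonneg (c^2*(1-P) + d^2*(1-Q))]

lemma sum_le_lieNorm (ζ : EuclideanSpace ℂ (Fin n)) (p q : Fin n → ℝ)
    (hP : ∑ j, p j ^ 2 ≤ 1) (hQ : ∑ j, q j ^ 2 ≤ 1)
    (hdet : (∑ j, p j * q j) ^ 2 ≤ (1 - ∑ j, p j ^ 2) * (1 - ∑ j, q j ^ 2)) :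
    (∑ j, (ζ j).re * p j) + (∑ j, (ζ j).im * q j) ≤ lieNorm n ζ := by
  obtain ⟨μ, hμabs, hT'⟩ := exists_rot ζ
  set ζ' : EuclideanSpace ℂ (Fin n) := μ • ζ with hζ'
  set c := μ.re with hc
  set d := μ.im with hd
  have hμ : c ^ 2 + d ^ 2 = 1 := by
    have h := Complex.sq_norm μ
    rw [hμabs, one_pow, Complex.normSq_apply] at h
    linear_combination -h
  have hre : ∀ j, (ζ' j).re = c * (ζ j).re - d * (ζ j).im := fun j => by
    simp [hζ', PiLp.smul_apply, smul_eq_mul, Complex.mul_re, hc, hd]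
  have him : ∀ j, (ζ' j).im = c * (ζ j).im + d * (ζ j).re := fun j => by
    simp [hζ', PiLp.smul_apply, smul_eq_mul, Complex.mul_im, hc, hd]
  set X' := ∑ j, (ζ' j).re ^ 2 with hX'
  set Y' := ∑ j, (ζ' j).im ^ 2 with hY'
  have hLie : lieNorm n ζ = Real.sqrt X' + Real.sqrt Y' := by
    have h1 : lieNorm n ζ' = lieNorm n ζ := by
      rw [hζ', lieNorm_smul, hμabs, one_mul]
    rw [← h1, lieNorm_eq_of_T_eq_zero ζ' hT']
  set p'' : Fin n → ℝ := fun j => c * p j + (-d) * q j with hp''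
  set q'' : Fin n → ℝ := fun j => d * p j + c * q j with hq''
  have hsplit : (∑ j, (ζ j).re * p j) + (∑ j, (ζ j).im * q j)
      = (∑ j, (ζ' j).re * p'' j) + (∑ j, (ζ' j).im * q'' j) := by
    rw [← Finset.sum_add_distrib, ← Finset.sum_add_distrib]
    refine Finset.sum_congr rfl fun j _ => ?_
    rw [hre j, him j]
    simp only [hp'', hq'']
    linear_combination (-((ζ j).re * p j + (ζ j).im * q j)) * hμ
  have hP'' : ∑ j, p'' j ^ 2 ≤ 1 := by
    have h1 : ∑ j, p'' j ^ 2 = ∑ j, (c * p j + (-d) * q j) * (c * p j + (-d) * q j) := by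
      exact Finset.sum_congr rfl fun j _ => by rw [hp'']; ring
    rw [h1, sum_rot_mul]
    have h2 := rot_entry_le c (-d) (∑ j, p j ^ 2) (∑ j, q j ^ 2) (∑ j, p j * q j)
      (by linear_combination hμ) hP hQ hdet
    nlinarith [h2]
  have hQ'' : ∑ j, q'' j ^ 2 ≤ 1 := by
    have h1 : ∑ j, q'' j ^ 2 = ∑ j, (d * p j + c * q j) * (d * p j + c * q j) := by
      exact Finset.sum_congr rfl fun j _ => by rw [hq'']; ring
    rw [h1, sum_rot_mul]
    have h2 := rot_entry_le d c (∑ j, p j ^ 2) (∑ j, q j ^ 2) (∑ j, p j * q j)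
      (by linear_combination hμ) hP hQ hdet
    nlinarith [h2]
  have hX'0 : 0 ≤ X' := by positivity
  have hY'0 : 0 ≤ Y' := by positivity
  have cs1 : ∑ j, (ζ' j).re * p'' j ≤ Real.sqrt X' := by
    have hcs := Finset.sum_mul_sq_le_sq_mul_sq Finset.univ (fun j => (ζ' j).re) p''
    have h1 : (∑ j, (ζ' j).re * p'' j) ^ 2 ≤ X' := by
      calc (∑ j, (ζ' j).re * p'' j) ^ 2 ≤ X' * ∑ j, p'' j ^ 2 := hcs
        _ ≤ X' * 1 := mul_le_mul_of_nonneg_left hP'' hX'0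
        _ = X' := mul_one _
    calc ∑ j, (ζ' j).re * p'' j ≤ |∑ j, (ζ' j).re * p'' j| := le_abs_self _
      _ = Real.sqrt ((∑ j, (ζ' j).re * p'' j) ^ 2) := (Real.sqrt_sq_eq_abs _).symm
      _ ≤ Real.sqrt X' := Real.sqrt_le_sqrt h1
  have cs2 : ∑ j, (ζ' j).im * q'' j ≤ Real.sqrt Y' := by
    have hcs := Finset.sum_mul_sq_le_sq_mul_sq Finset.univ (fun j => (ζ' j).im) q''
    have h1 : (∑ j, (ζ' j).im * q'' j) ^ 2 ≤ Y' := by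
      calc (∑ j, (ζ' j).im * q'' j) ^ 2 ≤ Y' * ∑ j, q'' j ^ 2 := hcs
        _ ≤ Y' * 1 := mul_le_mul_of_nonneg_left hQ'' hY'0
        _ = Y' := mul_one _
    calc ∑ j, (ζ' j).im * q'' j ≤ |∑ j, (ζ' j).im * q'' j| := le_abs_self _
      _ = Real.sqrt ((∑ j, (ζ' j).im * q'' j) ^ 2) := (Real.sqrt_sq_eq_abs _).symm
      _ ≤ Real.sqrt Y' := Real.sqrt_le_sqrt h1
  rw [hsplit, hLie]
  exact add_le_add cs1 cs2


set_option maxHeartbeats 1000000 in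
lemma exists_attain (ζ : EuclideanSpace ℂ (Fin n)) :
    ∃ p q : Fin n → ℝ, (∑ j, p j ^ 2 ≤ 1) ∧ (∑ j, q j ^ 2 ≤ 1) ∧
      ((∑ j, p j * q j) ^ 2 ≤ (1 - ∑ j, p j ^ 2) * (1 - ∑ j, q j ^ 2)) ∧
      (∑ j, (ζ j).re * p j) + (∑ j, (ζ j).im * q j) = lieNorm n ζ := by
  obtain ⟨μ, hμabs, hT'⟩ := exists_rot ζ
  set ζ' : EuclideanSpace ℂ (Fin n) := μ • ζ with hζ'
  set c := μ.re with hc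
  set d := μ.im with hd
  have hμ : c ^ 2 + d ^ 2 = 1 := by
    have h := Complex.sq_norm μ
    rw [hμabs, one_pow, Complex.normSq_apply] at h
    linear_combination -h
  have hre : ∀ j, (ζ' j).re = c * (ζ j).re - d * (ζ j).im := fun j => by
    simp [hζ', PiLp.smul_apply, smul_eq_mul, Complex.mul_re, hc, hd]
  have him : ∀ j, (ζ' j).im = c * (ζ j).im + d * (ζ j).re := fun j => by
    simp [hζ', PiLp.smul_apply, smul_eq_mul, Complex.mul_im, hc, hd]
  set X' := ∑ j, (ζ' j).re ^ 2 with hX'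
  set Y' := ∑ j, (ζ' j).im ^ 2 with hY'
  have hX'0 : 0 ≤ X' := by positivity
  have hY'0 : 0 ≤ Y' := by positivity
  have hLie : lieNorm n ζ = Real.sqrt X' + Real.sqrt Y' := by
    have h1 : lieNorm n ζ' = lieNorm n ζ := by
      rw [hζ', lieNorm_smul, hμabs, one_mul]
    rw [← h1, lieNorm_eq_of_T_eq_zero ζ' hT']
  set p'' : Fin n → ℝ := fun j => (ζ' j).re / Real.sqrt X' with hp''
  set q'' : Fin n → ℝ := fun j => (ζ' j).im / Real.sqrt Y' with hq''
  have hA : ∑ j, p'' j ^ 2 ≤ 1 := by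
    have h1 : ∑ j, p'' j ^ 2 = ∑ j, (ζ' j).re ^ 2 / X' :=
      Finset.sum_congr rfl fun j _ => by
        simp only [hp'']
        rw [div_pow, Real.sq_sqrt hX'0]
    rw [h1, ← Finset.sum_div, ← hX']
    rcases eq_or_ne X' 0 with h | h
    · simp [h]
    · rw [div_self h]
  have hB : ∑ j, q'' j ^ 2 ≤ 1 := by
    have h1 : ∑ j, q'' j ^ 2 = ∑ j, (ζ' j).im ^ 2 / Y' :=
      Finset.sum_congr rfl fun j _ => by
        simp only [hq'']
        rw [div_pow, Real.sq_sqrt hY'0]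
    rw [h1, ← Finset.sum_div, ← hY']
    rcases eq_or_ne Y' 0 with h | h
    · simp [h]
    · rw [div_self h]
  have hR'' : ∑ j, p'' j * q'' j = 0 := by
    have h1 : ∑ j, p'' j * q'' j
        = ∑ j, (ζ' j).re * (ζ' j).im / (Real.sqrt X' * Real.sqrt Y') :=
      Finset.sum_congr rfl fun j _ => by
        simp only [hp'', hq'']
        rw [div_mul_div_comm]
    rw [h1, ← Finset.sum_div, hT', zero_div]
  have hval1 : ∑ j, (ζ' j).re * p'' j = Real.sqrt X' := by
    have h1 : ∑ j, (ζ' j).re * p'' j = ∑ j, (ζ' j).re ^ 2 / Real.sqrt X' :=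
      Finset.sum_congr rfl fun j _ => by
        simp only [hp'']
        rw [sq, mul_div_assoc]
    rw [h1, ← Finset.sum_div, ← hX', Real.div_sqrt]
  have hval2 : ∑ j, (ζ' j).im * q'' j = Real.sqrt Y' := by
    have h1 : ∑ j, (ζ' j).im * q'' j = ∑ j, (ζ' j).im ^ 2 / Real.sqrt Y' :=
      Finset.sum_congr rfl fun j _ => by
        simp only [hq'']
        rw [sq, mul_div_assoc]
    rw [h1, ← Finset.sum_div, ← hY', Real.div_sqrt]
  set A := ∑ j, p'' j ^ 2 with hAdef
  set B := ∑ j, q'' j ^ 2 with hBdef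
  have hPsum : ∑ j, (c * p'' j + d * q'' j) ^ 2 = c ^ 2 * A + d ^ 2 * B := by
    have h1 : ∑ j, (c * p'' j + d * q'' j) ^ 2
        = ∑ j, (c * p'' j + d * q'' j) * (c * p'' j + d * q'' j) :=
      Finset.sum_congr rfl fun j _ => sq _
    rw [h1, sum_rot_mul, hR'']; ring
  have hQsum : ∑ j, ((-d) * p'' j + c * q'' j) ^ 2 = d ^ 2 * A + c ^ 2 * B := by
    have h1 : ∑ j, ((-d) * p'' j + c * q'' j) ^ 2
        = ∑ j, ((-d) * p'' j + c * q'' j) * ((-d) * p'' j + c * q'' j) :=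
      Finset.sum_congr rfl fun j _ => sq _
    rw [h1, sum_rot_mul, hR'']; ring
  have hRsum : ∑ j, (c * p'' j + d * q'' j) * ((-d) * p'' j + c * q'' j)
      = c * d * (B - A) := by
    rw [sum_rot_mul, hR'']; ring
  refine ⟨fun j => c * p'' j + d * q'' j, fun j => (-d) * p'' j + c * q'' j, ?_, ?_, ?_, ?_⟩
  · rw [hPsum]
    nlinarith [sq_nonneg c, sq_nonneg d, hA, hB, hμ]
  · rw [hQsum]
    nlinarith [sq_nonneg c, sq_nonneg d, hA, hB, hμ]
  · rw [hPsum, hQsum, hRsum]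
    have key : (1 - (c ^ 2 * A + d ^ 2 * B)) * (1 - (d ^ 2 * A + c ^ 2 * B))
        - (c * d * (B - A)) ^ 2 = (1 - A) * (1 - B) := by
      linear_combination ((c ^ 2 + d ^ 2 - 1) - (c ^ 2 + d ^ 2) * ((1 - A) + (1 - B)) + (c ^ 2 + d ^ 2 + 1) * (1 - A) * (1 - B)) * hμ
    nlinarith [key, mul_nonneg (sub_nonneg.2 hA) (sub_nonneg.2 hB)]
  · have hsplit : (∑ j, (ζ j).re * (c * p'' j + d * q'' j))
        + (∑ j, (ζ j).im * ((-d) * p'' j + c * q'' j))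
        = (∑ j, (ζ' j).re * p'' j) + (∑ j, (ζ' j).im * q'' j) := by
      rw [← Finset.sum_add_distrib, ← Finset.sum_add_distrib]
      refine Finset.sum_congr rfl fun j _ => ?_
      rw [hre j, him j]
      ring
    rw [hsplit, hval1, hval2, hLie]

end LieAux

/-- The function `ζ ↦ (|ζ|² + √(|ζ|⁴ − ||ζ|_ℂ²|²))^{1/2}` is a norm on `ℂⁿ`. -/
theorem lieNorm_is_norm (n : ℕ) :
    (∀ ζ : EuclideanSpace ℂ (Fin n), 0 ≤ lieNorm n ζ) ∧
    (∀ ζ : EuclideanSpace ℂ (Fin n), lieNorm n ζ = 0 ↔ ζ = 0) ∧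
    (∀ (c : ℂ) (ζ : EuclideanSpace ℂ (Fin n)),
      lieNorm n (c • ζ) = ‖c‖ * lieNorm n ζ) ∧
    (∀ ζ χ : EuclideanSpace ℂ (Fin n),
      lieNorm n (ζ + χ) ≤ lieNorm n ζ + lieNorm n χ) := by
  refine ⟨fun ζ => Real.sqrt_nonneg _, fun ζ => ?_, LieAux.lieNorm_smul, fun ζ χ => ?_⟩
  · constructor
    · intro h
      rw [lieNorm, Real.sqrt_eq_zero'] at h
      have h2 := Real.sqrt_nonneg (‖ζ‖ ^ 4 - ‖∑ j, ζ j ^ 2‖ ^ 2)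
      have h3 : ‖ζ‖ ^ 2 ≤ 0 := by linarith
      have h4 : ‖ζ‖ = 0 := by nlinarith [norm_nonneg ζ]
      exact norm_eq_zero.mp h4
    · intro h
      subst h
      simp [lieNorm]
  · obtain ⟨p, q, hP, hQ, hdet, hval⟩ := LieAux.exists_attain (ζ + χ)
    have hre : ∑ j, ((ζ + χ) j).re * p j
        = (∑ j, (ζ j).re * p j) + ∑ j, (χ j).re * p j := by
      rw [← Finset.sum_add_distrib]
      refine Finset.sum_congr rfl fun j _ => ?_
      have : (ζ + χ) j = ζ j + χ j := rfl
      rw [this, Complex.add_re]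
      ring
    have him : ∑ j, ((ζ + χ) j).im * q j
        = (∑ j, (ζ j).im * q j) + ∑ j, (χ j).im * q j := by
      rw [← Finset.sum_add_distrib]
      refine Finset.sum_congr rfl fun j _ => ?_
      have : (ζ + χ) j = ζ j + χ j := rfl
      rw [this, Complex.add_im]
      ring
    have h1 := LieAux.sum_le_lieNorm ζ p q hP hQ hdet
    have h2 := LieAux.sum_le_lieNorm χ p q hP hQ hdet
    rw [← hval, hre, him]
    linarith
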